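/- Let F be a field and L ∈ F[x₁,…,x_n] a nonzero polynomial of total degree d. Write L = F_d + F_{d-1} + ⋯ + F_0 where F_i is the homogeneous component of degree i. If F_d is irreducible over the algebraic closure of F, then L is irreducible over the algebraic closure of F. -/

import Mathlib

open MvPolynomial

namespace Stmt5Aux

variable {σ : Type*} {R : Type*}

lemma degree_add (u v : σ →₀ ℕ) : Finsupp.degree (u + v) = u.degree + v.degree := by
  rw [Finsupp.degree_eq_weight_one, map_add]

lemma totalDegree_eq_sup_degree [CommSemiring R] (p : MvPolynomial σ R) :
    p.totalDegree = p.support.sup Finsupp.degree := rfl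

lemma hc_top_ne_zero [CommSemiring R] {p : MvPolynomial σ R} (hp : p ≠ 0) :
    homogeneousComponent p.totalDegree p ≠ 0 := by
  have hsupp : p.support.Nonempty := by
    rwa [Finset.nonempty_iff_ne_empty, Ne, MvPolynomial.support_eq_empty]
  obtain ⟨m, hm, hmdeg⟩ := Finset.exists_mem_eq_sup _ hsupp Finsupp.degree
  intro h
  have := coeff_homogeneousComponent (σ := σ) (R := R) p.totalDegree p m
  rw [h, totalDegree_eq_sup_degree, hmdeg] at this
  simp only [coeff_zero, if_pos rfl] at this
  exact (MvPolynomial.mem_support_iff.mp hm) this.symm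

lemma hc_mul [CommSemiring R] (p q : MvPolynomial σ R) :
    homogeneousComponent (p.totalDegree + q.totalDegree) (p * q) =
      homogeneousComponent p.totalDegree p * homogeneousComponent q.totalDegree q := by
  classical
  ext m
  rw [coeff_homogeneousComponent, MvPolynomial.coeff_mul, MvPolynomial.coeff_mul]
  split_ifs with h
  · apply Finset.sum_congr rfl
    rintro ⟨u, v⟩ huv
    rw [Finset.HasAntidiagonal.mem_antidiagonal] at huv
    rw [coeff_homogeneousComponent, coeff_homogeneousComponent]
    have hsum : u.degree + v.degree = p.totalDegree + q.totalDegree := by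
      rw [← degree_add, huv, h]
    by_cases hu : u.degree = p.totalDegree
    · have hv : v.degree = q.totalDegree := by omega
      rw [if_pos hu, if_pos hv]
    · rw [if_neg hu]
      rcases lt_or_gt_of_ne hu with hlt | hgt
      · have hv : q.totalDegree < v.degree := by omega
        have : coeff v q = 0 := by
          apply coeff_eq_zero_of_totalDegree_lt
          exact hv
        rw [this, mul_zero]
        split_ifs <;> simp
      · have : coeff u p = 0 := by
          apply coeff_eq_zero_of_totalDegree_lt
          exact hgt
        rw [this, zero_mul]
        split_ifs <;> simp
  · symm
    apply Finset.sum_eq_zero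
    rintro ⟨u, v⟩ huv
    rw [Finset.HasAntidiagonal.mem_antidiagonal] at huv
    rw [coeff_homogeneousComponent, coeff_homogeneousComponent]
    by_cases hu : u.degree = p.totalDegree
    · by_cases hv : v.degree = q.totalDegree
      · exfalso
        apply h
        rw [← huv, degree_add, hu, hv]
      · rw [if_neg hv, mul_zero]
    · rw [if_neg hu, zero_mul]

lemma totalDegree_mul_eq [CommRing R] [IsDomain R] {p q : MvPolynomial σ R}
    (hp : p ≠ 0) (hq : q ≠ 0) :
    (p * q).totalDegree = p.totalDegree + q.totalDegree := by
  refine le_antisymm (totalDegree_mul p q) ?_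
  by_contra hlt
  push_neg at hlt
  have h0 : homogeneousComponent (p.totalDegree + q.totalDegree) (p * q) = 0 :=
    homogeneousComponent_eq_zero _ _ hlt
  rw [hc_mul] at h0
  exact mul_ne_zero (hc_top_ne_zero hp) (hc_top_ne_zero hq) h0

lemma totalDegree_eq_zero_of_isUnit [CommRing R] [IsDomain R] {p : MvPolynomial σ R}
    (hp : IsUnit p) : p.totalDegree = 0 := by
  obtain ⟨u, rfl⟩ := hp
  have hu : (u : MvPolynomial σ R) ≠ 0 := u.ne_zero
  have hv : ((u⁻¹ : (MvPolynomial σ R)ˣ) : MvPolynomial σ R) ≠ 0 := Units.ne_zero _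
  have h := totalDegree_mul_eq hu hv
  rw [u.mul_inv, totalDegree_one] at h
  omega

lemma eq_C_of_totalDegree_eq_zero [CommSemiring R] {p : MvPolynomial σ R}
    (h : p.totalDegree = 0) : p = C (coeff 0 p) := by
  have hs := sum_homogeneousComponent p
  rw [h] at hs
  simpa [Finset.sum_range_one] using hs.symm

lemma isUnit_of_totalDegree_eq_zero {K : Type*} [Field K] {p : MvPolynomial σ K}
    (hp : p ≠ 0) (h : p.totalDegree = 0) : IsUnit p := by
  have hc : p = C (coeff 0 p) := eq_C_of_totalDegree_eq_zero h
  set c := coeff 0 p with hcdef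
  have hc0 : c ≠ 0 := by
    intro h0; rw [h0, map_zero] at hc; exact hp hc
  refine IsUnit.of_mul_eq_one (a := p) (C c⁻¹) ?_
  rw [hc, ← map_mul, mul_inv_cancel₀ hc0, map_one]

lemma hc_map [CommSemiring R] {S : Type*} [CommSemiring S] (f : R →+* S)
    (k : ℕ) (p : MvPolynomial σ R) :
    MvPolynomial.map f (homogeneousComponent k p) =
      homogeneousComponent k (MvPolynomial.map f p) := by
  ext m
  rw [coeff_map, coeff_homogeneousComponent, coeff_homogeneousComponent, coeff_map]
  split_ifs <;> simp

lemma totalDegree_map_eq [CommSemiring R] {S : Type*} [CommSemiring S] {f : R →+* S}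
    (hf : Function.Injective f) (p : MvPolynomial σ R) :
    (MvPolynomial.map f p).totalDegree = p.totalDegree := by
  rw [totalDegree_eq_sup_degree, totalDegree_eq_sup_degree,
    MvPolynomial.support_map_of_injective p hf]

end Stmt5Aux

theorem stmt5 (F : Type*) [Field F] (n d : ℕ) (L : MvPolynomial (Fin n) F)
    (hL : L ≠ 0) (hdeg : L.totalDegree = d)
    (hirr : Irreducible (MvPolynomial.map (algebraMap F (AlgebraicClosure F))
      (MvPolynomial.homogeneousComponent d L))) :
    Irreducible (MvPolynomial.map (algebraMap F (AlgebraicClosure F)) L) := by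
  classical
  set K := AlgebraicClosure F
  set f := algebraMap F K with hf
  have hfinj : Function.Injective (f : F →+* K) := (f : F →+* K).injective
  set M := MvPolynomial.map (f : F →+* K) L with hM
  have hM0 : M ≠ 0 := by
    intro h
    exact hL (MvPolynomial.map_injective _ hfinj
      (by rw [map_zero, ← hM]; exact h))
  have hMd : M.totalDegree = d := by
    rw [hM, Stmt5Aux.totalDegree_map_eq hfinj, hdeg]
  have hhcM : MvPolynomial.homogeneousComponent d M =
      MvPolynomial.map (f : F →+* K) (MvPolynomial.homogeneousComponent d L) :=
    (Stmt5Aux.hc_map _ d L).symm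
  rw [← hhcM] at hirr
  -- a polynomial whose top homogeneous component is a unit is a unit
  have key : ∀ p : MvPolynomial (Fin n) K, p ≠ 0 →
      IsUnit (MvPolynomial.homogeneousComponent p.totalDegree p) → IsUnit p := by
    intro p hp hu
    have htd0 : (MvPolynomial.homogeneousComponent p.totalDegree p).totalDegree = 0 :=
      Stmt5Aux.totalDegree_eq_zero_of_isUnit hu
    have hne := Stmt5Aux.hc_top_ne_zero hp
    have hdeg0 : p.totalDegree = 0 := by
      have := (MvPolynomial.homogeneousComponent_isHomogeneous p.totalDegree p).totalDegree hne
      omega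
    exact Stmt5Aux.isUnit_of_totalDegree_eq_zero hp hdeg0
  constructor
  · -- M is not a unit
    intro hu
    have h0 : M.totalDegree = 0 := Stmt5Aux.totalDegree_eq_zero_of_isUnit hu
    have hd0 : d = 0 := by omega
    have : MvPolynomial.homogeneousComponent d M = M := by
      subst hd0
      rw [MvPolynomial.homogeneousComponent_zero,
        ← Stmt5Aux.eq_C_of_totalDegree_eq_zero h0]
    rw [this] at hirr
    exact hirr.not_isUnit hu
  · intro a b hab
    have ha0 : a ≠ 0 := by rintro rfl; rw [zero_mul] at hab; exact hM0 hab
    have hb0 : b ≠ 0 := by rintro rfl; rw [mul_zero] at hab; exact hM0 hab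
    have hsum : a.totalDegree + b.totalDegree = d := by
      rw [← hMd, hab, Stmt5Aux.totalDegree_mul_eq ha0 hb0]
    have hfact : MvPolynomial.homogeneousComponent d M =
        MvPolynomial.homogeneousComponent a.totalDegree a *
          MvPolynomial.homogeneousComponent b.totalDegree b := by
      rw [hab, ← hsum, Stmt5Aux.hc_mul]
    rcases hirr.isUnit_or_isUnit hfact with h | h
    · exact Or.inl (key a ha0 h)
    · exact Or.inr (key b hb0 h)
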